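/- Under the same hypotheses, η = 1 − |v|² satisfies the ODE η'' − 2ω·ln(1−η) + (c² − 4ω)·η = 0. -/

import Mathlib

open Complex Filter

private lemma aux_re {f : ℝ → ℂ} {f' : ℂ} {x : ℝ} (h : HasDerivAt f f' x) :
    HasDerivAt (fun y => (f y).re) f'.re x := by
  exact (Complex.reCLM.hasFDerivAt.comp_hasDerivAt x h)

private lemma aux_im {f : ℝ → ℂ} {f' : ℂ} {x : ℝ} (h : HasDerivAt f f' x) :
    HasDerivAt (fun y => (f y).im) f'.im x := by
  exact (Complex.imCLM.hasFDerivAt.comp_hasDerivAt x h)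

private lemma aux_conj {f : ℝ → ℂ} {f' : ℂ} {x : ℝ} (h : HasDerivAt f f' x) :
    HasDerivAt (fun y => (starRingEnd ℂ) (f y)) ((starRingEnd ℂ) f') x := by
  simpa [Complex.star_def] using h.star

private lemma aux_normSq {f : ℝ → ℂ} {f' : ℂ} {x : ℝ} (h : HasDerivAt f f' x) :
    HasDerivAt (fun s => ‖f s‖^2) (2 * ((starRingEnd ℂ) (f x) * f').re) x := by
  have h1 : HasDerivAt (fun s => (starRingEnd ℂ) (f s) * f s)
      ((starRingEnd ℂ) f' * f x + (starRingEnd ℂ) (f x) * f') x :=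
    (aux_conj h).mul h
  have h2 := aux_re h1
  have hfun : (fun s => ((starRingEnd ℂ) (f s) * f s).re) = (fun s => ‖f s‖^2) := by
    funext s
    rw [← Complex.normSq_eq_conj_mul_self]
    simp only [Complex.ofReal_re, Complex.normSq_eq_norm_sq]
  have hval : ((starRingEnd ℂ) f' * f x + (starRingEnd ℂ) (f x) * f').re
      = 2 * ((starRingEnd ℂ) (f x) * f').re := by
    simp [Complex.add_re, Complex.mul_re]; ring
  rw [hfun, hval] at h2
  exact h2

theorem stmt_18 (c ω : ℝ) (v : ℝ → ℂ)
    (hv : ContDiff ℝ 2 v) (hne : ∀ σ, v σ ≠ 0)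
    (hODE : ∀ σ : ℝ,
      I * (c : ℂ) * deriv v σ + deriv (deriv v) σ
        + (ω : ℂ) * (v σ / ((‖v σ‖^2 : ℝ) : ℂ)) * (1 - ((‖v σ‖^2 : ℝ) : ℂ)) = 0)
    (hv' : Tendsto (deriv v) atTop (nhds 0))
    (hη : Tendsto (fun σ => 1 - ‖v σ‖^2) atTop (nhds 0)) :
    ∀ σ : ℝ,
      deriv (deriv (fun s => 1 - ‖v s‖^2)) σ
        - 2*ω*Real.log (1 - (1 - ‖v σ‖^2))
        + (c^2 - 4*ω) * (1 - ‖v σ‖^2) = 0 := by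
  have hdv : Differentiable ℝ v := hv.differentiable (by norm_num)
  have hdv' : Differentiable ℝ (deriv v) := by
    have h : ContDiff ℝ ((1:ℕ∞)+1) v := hv.of_le (by norm_num)
    exact (contDiff_succ_iff_deriv.mp h).2.2.differentiable (by norm_num)
  set F : ℝ → ℝ := fun σ => ‖v σ‖^2 with hFdef
  set G : ℝ → ℂ := fun σ => (starRingEnd ℂ) (v σ) * deriv v σ with hGdef
  have hFpos : ∀ σ, 0 < F σ := fun σ => pow_pos (norm_pos_iff.mpr (hne σ)) 2
  have hcvv : ∀ σ, (starRingEnd ℂ) (v σ) * v σ = ((F σ : ℝ) : ℂ) := by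
    intro σ
    rw [← Complex.normSq_eq_conj_mul_self]
    norm_cast
    simp [hFdef, Complex.normSq_eq_norm_sq]
  have hG' : ∀ σ, HasDerivAt G
      (((Complex.normSq (deriv v σ) : ℝ) : ℂ) + (starRingEnd ℂ) (v σ) * deriv (deriv v) σ) σ := by
    intro σ
    have := (aux_conj (hdv σ).hasDerivAt).mul (hdv' σ).hasDerivAt
    rw [Complex.normSq_eq_conj_mul_self]; exact this
  have hF' : ∀ σ, HasDerivAt F (2 * (G σ).re) σ := fun σ => aux_normSq (hdv σ).hasDerivAt
  -- express v''
  have hu : ∀ σ, deriv (deriv v) σ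
      = -(I * (c:ℂ) * deriv v σ) - (ω:ℂ) * (v σ / ((F σ : ℝ):ℂ)) * (1 - ((F σ:ℝ):ℂ)) := by
    intro σ; have := hODE σ; linear_combination this
  have hFne : ∀ σ, ((F σ : ℝ):ℂ) ≠ 0 := fun σ => by exact_mod_cast ne_of_gt (hFpos σ)
  have hu2 : ∀ σ, ((F σ:ℝ):ℂ) * deriv (deriv v) σ
      = -(I * (c:ℂ) * deriv v σ) * ((F σ:ℝ):ℂ) - (ω:ℂ) * v σ * (1 - ((F σ:ℝ):ℂ)) := by
    intro σ
    have hFinv : ((F σ:ℝ):ℂ) * (((F σ:ℝ):ℂ))⁻¹ = 1 := mul_inv_cancel₀ (hFne σ)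
    rw [hu σ, div_eq_mul_inv]
    linear_combination (-(ω:ℂ) * v σ * (1 - ((F σ:ℝ):ℂ))) * hFinv
  -- conj v * v''
  have hcvu : ∀ σ, (starRingEnd ℂ) (v σ) * deriv (deriv v) σ
      = -(I * (c:ℂ)) * G σ - (ω:ℂ) * (1 - ((F σ:ℝ):ℂ)) := by
    intro σ
    apply mul_left_cancel₀ (hFne σ)
    have h2 := hu2 σ
    simp only [hGdef]
    linear_combination ((starRingEnd ℂ) (v σ)) * h2 - (ω:ℂ) * (1 - ((F σ:ℝ):ℂ)) * hcvv σ
  have hcvu_re : ∀ σ, ((starRingEnd ℂ) (v σ) * deriv (deriv v) σ).re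
      = c * (G σ).im - ω * (1 - F σ) := by
    intro σ; rw [hcvu σ]; simp [Complex.mul_re]; try ring
  have hcvu_im : ∀ σ, ((starRingEnd ℂ) (v σ) * deriv (deriv v) σ).im
      = -c * (G σ).re := by
    intro σ; rw [hcvu σ]; simp [Complex.mul_im]; try ring
  -- conj v' * v'' (times F)
  have hcwu : ∀ σ, (F σ) * ((starRingEnd ℂ) (deriv v σ) * deriv (deriv v) σ).re
      = -ω * (1 - F σ) * (G σ).re := by
    intro σ
    have hcww : (starRingEnd ℂ) (deriv v σ) * deriv v σ
        = ((Complex.normSq (deriv v σ) : ℝ) : ℂ) := Complex.normSq_eq_conj_mul_self.symm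
    have hkey : ((F σ:ℝ):ℂ) * ((starRingEnd ℂ) (deriv v σ) * deriv (deriv v) σ)
        = -(I * (c:ℂ)) * ((Complex.normSq (deriv v σ) : ℝ):ℂ) * ((F σ:ℝ):ℂ)
          - (ω:ℂ) * ((starRingEnd ℂ) (G σ)) * (1 - ((F σ:ℝ):ℂ)) := by
      have hGc : (starRingEnd ℂ) (G σ) = (starRingEnd ℂ) (deriv v σ) * v σ := by
        simp [hGdef, mul_comm]
      rw [hGc]
      linear_combination ((starRingEnd ℂ) (deriv v σ)) * hu2 σ
        - (I * (c:ℂ)) * ((F σ:ℝ):ℂ) * hcww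
    have h2 := congrArg Complex.re hkey
    rw [Complex.re_ofReal_mul] at h2
    have h3 : (-(I * (c:ℂ)) * ((Complex.normSq (deriv v σ) : ℝ):ℂ) * ((F σ:ℝ):ℂ)
          - (ω:ℂ) * ((starRingEnd ℂ) (G σ)) * (1 - ((F σ:ℝ):ℂ))).re
        = -ω * (1 - F σ) * (G σ).re := by
      simp [Complex.sub_re, Complex.mul_re, Complex.mul_im]; try ring
    rw [h3] at h2
    exact h2
  -- conserved quantity P
  set P : ℝ → ℝ := fun σ => (G σ).im - (c/2) * (1 - F σ) with hPdef
  have hP' : ∀ σ, HasDerivAt P 0 σ := by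
    intro σ
    have h1 := (aux_im (hG' σ)).sub
      (((hasDerivAt_const σ (1:ℝ)).sub (hF' σ)).const_mul (c/2))
    refine h1.congr_deriv ?_; symm
    rw [Complex.add_im, hcvu_im σ]
    simp
    ring
  have hPconst : ∀ x y, P x = P y :=
    is_const_of_deriv_eq_zero (fun σ => (hP' σ).differentiableAt)
      (fun σ => (hP' σ).deriv)
  have hGlim : Tendsto G atTop (nhds 0) := by
    have hb : ∀ᶠ σ in atTop, ‖G σ‖ ≤ 2 * ‖deriv v σ‖ := by
      filter_upwards [hη.eventually (eventually_gt_nhds (show (-3:ℝ) < 0 by norm_num))] with σ hσ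
      have h1 : ‖v σ‖ ≤ 2 := by nlinarith [norm_nonneg (v σ)]
      have h2 : ‖G σ‖ = ‖v σ‖ * ‖deriv v σ‖ := by
        simp [hGdef]
      rw [h2]
      exact mul_le_mul_of_nonneg_right h1 (norm_nonneg _)
    exact squeeze_zero_norm' hb (by simpa using hv'.norm.const_mul 2)
  have hPlim : Tendsto P atTop (nhds 0) := by
    have h1 : Tendsto (fun σ => (G σ).im) atTop (nhds 0) := by
      simpa [Function.comp_def] using (Complex.continuous_im.tendsto 0).comp hGlim
    have h2 := h1.sub (hη.const_mul (c/2))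
    rw [show (0:ℝ) - (c/2) * 0 = 0 from by ring] at h2
    exact h2
  have hP0 : ∀ σ, P σ = 0 := by
    intro σ
    have h1 : Tendsto P atTop (nhds (P σ)) := by
      have : P = fun _ => P σ := funext fun y => hPconst y σ
      rw [this]; exact tendsto_const_nhds
    exact tendsto_nhds_unique h1 hPlim
  -- conserved quantity Q
  set Q : ℝ → ℝ := fun σ => ‖deriv v σ‖^2 + ω * Real.log (F σ) + ω * (1 - F σ) with hQdef
  have hW' : ∀ σ, HasDerivAt (fun s => ‖deriv v s‖^2)
      (2 * ((starRingEnd ℂ) (deriv v σ) * deriv (deriv v) σ).re) σ :=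
    fun σ => aux_normSq (hdv' σ).hasDerivAt
  have hlog' : ∀ σ, HasDerivAt (fun s => Real.log (F s)) ((F σ)⁻¹ * (2 * (G σ).re)) σ :=
    fun σ => (Real.hasDerivAt_log (ne_of_gt (hFpos σ))).comp σ (hF' σ)
  have hQ' : ∀ σ, HasDerivAt Q 0 σ := by
    intro σ
    have h1 := ((hW' σ).add ((hlog' σ).const_mul ω)).add
      (((hasDerivAt_const σ (1:ℝ)).sub (hF' σ)).const_mul ω)
    refine h1.congr_deriv ?_; symm
    have hFinv : F σ * (F σ)⁻¹ = 1 := mul_inv_cancel₀ (ne_of_gt (hFpos σ))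
    have hw := hcwu σ
    linear_combination (-2*(F σ)⁻¹) * hw
      + (2*((starRingEnd ℂ) (deriv v σ) * deriv (deriv v) σ).re - 2*ω*(G σ).re) * hFinv
  have hQconst : ∀ x y, Q x = Q y :=
    is_const_of_deriv_eq_zero (fun σ => (hQ' σ).differentiableAt)
      (fun σ => (hQ' σ).deriv)
  have hF1 : Tendsto F atTop (nhds 1) := by
    have h := (tendsto_const_nhds :
      Tendsto (fun _ : ℝ => (1:ℝ)) atTop (nhds 1)).sub hη
    simpa using h
  have hQlim : Tendsto Q atTop (nhds 0) := by
    have h1 : Tendsto (fun σ => ‖deriv v σ‖^2) atTop (nhds 0) := by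
      have := hv'.norm
      simp only [norm_zero] at this
      simpa using this.pow 2
    have h2 : Tendsto (fun σ => Real.log (F σ)) atTop (nhds 0) := by
      have := (Real.continuousAt_log one_ne_zero).tendsto.comp hF1
      simpa [Function.comp_def] using this
    have h3 := (h1.add (h2.const_mul ω)).add (hη.const_mul ω)
    rw [show (0:ℝ) + ω * 0 + ω * 0 = 0 from by ring] at h3
    exact h3
  have hQ0 : ∀ σ, Q σ = 0 := by
    intro σ
    have h1 : Tendsto Q atTop (nhds (Q σ)) := by
      have : Q = fun _ => Q σ := funext fun y => hQconst y σ
      rw [this]; exact tendsto_const_nhds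
    exact tendsto_nhds_unique h1 hQlim
  -- final assembly
  intro σ
  have hd1 : deriv (fun s => 1 - ‖v s‖^2) = fun s => -(2 * (G s).re) := by
    funext s
    have h := ((hasDerivAt_const s (1:ℝ)).sub (hF' s)).deriv
    erw [h]; ring
  have hd2 : HasDerivAt (fun s => -(2 * (G s).re))
      (-(2 * (Complex.normSq (deriv v σ)
        + ((starRingEnd ℂ) (v σ) * deriv (deriv v) σ).re))) σ := by
    have h := ((aux_re (hG' σ)).const_mul (2:ℝ)).neg
    exact h.congr_deriv (by simp [Complex.add_re])
  have hdd : deriv (deriv (fun s => 1 - ‖v s‖^2)) σ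
      = -(2 * (Complex.normSq (deriv v σ)
        + ((starRingEnd ℂ) (v σ) * deriv (deriv v) σ).re)) := by
    rw [hd1]; exact hd2.deriv
  rw [hdd, hcvu_re σ]
  have harg : (1 : ℝ) - (1 - ‖v σ‖^2) = ‖v σ‖^2 := by ring
  rw [harg]
  have hns : Complex.normSq (deriv v σ) = ‖deriv v σ‖^2 := by
    simp [Complex.normSq_eq_norm_sq]
  have hp := hP0 σ
  have hq := hQ0 σ
  simp only [hPdef, hQdef] at hp hq
  linear_combination (-2:ℝ) * hq - 2*c*hp - 2*hns
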